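/- Let K be a compact Hausdorff space whose derived set K′ (the set of non-isolated points of K) is infinite, and let the scalar field be 𝕜 ∈ {ℝ, ℂ}. Then there exists a linear isometric embedding of c₀ into C(K) whose range does SPR. -/

import Mathlib

open scoped ZeroAtInfty

noncomputable section

/-- The pointwise modulus of a continuous function, as a real-valued continuous function. -/
def cmAbs {K : Type*} [TopologicalSpace K] {𝕜 : Type*} [RCLike 𝕜]
    (f : C(K, 𝕜)) : C(K, ℝ) :=
  ⟨fun x => ‖f x‖, (map_continuous f).norm⟩

/-- `inf_{‖λ‖ = 1} ‖f - λ • g‖`. -/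
def sprInf {K : Type*} [TopologicalSpace K] [CompactSpace K] {𝕜 : Type*} [RCLike 𝕜]
    (f g : C(K, 𝕜)) : ℝ :=
  ⨅ l : {c : 𝕜 // ‖c‖ = 1}, ‖f - (l : 𝕜) • g‖

/-- A subspace `E ⊆ C(K, 𝕜)` does `C`-stable phase retrieval. -/
def DoesCSPR {K : Type*} [TopologicalSpace K] [CompactSpace K] {𝕜 : Type*} [RCLike 𝕜]
    (E : Submodule 𝕜 C(K, 𝕜)) (C : ℝ) : Prop :=
  ∀ f ∈ E, ∀ g ∈ E, sprInf f g ≤ C * ‖cmAbs f - cmAbs g‖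

/-- A subspace `E ⊆ C(K, 𝕜)` does stable phase retrieval. -/
def DoesSPR {K : Type*} [TopologicalSpace K] [CompactSpace K] {𝕜 : Type*} [RCLike 𝕜]
    (E : Submodule 𝕜 C(K, 𝕜)) : Prop :=
  ∃ C : ℝ, 1 ≤ C ∧ DoesCSPR E C


section Aux


open Set Filter Topology

section chain

/-- Generic chain construction. -/
lemma exists_chain {α : Type*} {T : α → Prop} {N : α → α → Prop} (init : α) (hinit : T init)
    (step : ∀ a, T a → ∃ b, T b ∧ N a b) :
    ∃ f : ℕ → α, f 0 = init ∧ (∀ n, T (f n)) ∧ ∀ n, N (f n) (f (n + 1)) := by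
  choose g hgT hgN using step
  let f : ℕ → {a : α // T a} := fun n =>
    Nat.rec ⟨init, hinit⟩ (fun _ p => ⟨g p.1 p.2, hgT p.1 p.2⟩) n
  exact ⟨fun n => (f n).1, rfl, fun n => (f n).2, fun n => hgN (f n).1 (f n).2⟩

end chain

variable {K : Type*} [TopologicalSpace K] [CompactSpace K] [T2Space K]

lemma shrink_open {U : Set K} (hU : IsOpen U) {z : K} (hz : z ∈ U) :
    ∃ B : Set K, IsOpen B ∧ z ∈ B ∧ closure B ⊆ U := by
  obtain ⟨V, hV, hVc, hVU⟩ := exists_mem_nhds_isClosed_subset (hU.mem_nhds hz)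
  refine ⟨interior V, isOpen_interior, mem_interior_iff_mem_nhds.2 hV, ?_⟩
  calc closure (interior V) ⊆ closure V := closure_mono interior_subset
    _ = V := hVc.closure_eq
    _ ⊆ U := hVU

lemma L1step (D : Set K) (G : Set K) (hG : IsOpen G) (hGi : (G ∩ D).Infinite) :
    ∃ p : Set K × Set K,
      (IsOpen p.1 ∧ IsOpen p.2 ∧ (p.2 ∩ D).Infinite ∧ (p.1 ∩ D).Nonempty) ∧
      (p.1 ⊆ G ∧ p.2 ⊆ G ∧ Disjoint p.1 p.2) := by
  by_cases h : ∃ z ∈ G ∩ D, ∃ W : Set K, IsOpen W ∧ z ∈ W ∧ ((G ∩ D) \ W).Infinite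
  · obtain ⟨z, hzGD, W, hWo, hzW, hWi⟩ := h
    obtain ⟨B, hBo, hzB, hBc⟩ := shrink_open (hWo.inter hG) ⟨hzW, hzGD.1⟩
    have hBG : B ⊆ G := fun x hx => (hBc (subset_closure hx)).2
    refine ⟨⟨B, G \ closure B⟩, ⟨hBo, hG.sdiff isClosed_closure, ?_, ⟨z, hzB, hzGD.2⟩⟩,
      hBG, fun x hx => hx.1, ?_⟩
    · refine hWi.mono fun x hx => ?_
      exact ⟨⟨hx.1.1, fun hc => hx.2 (hBc hc).1⟩, hx.1.2⟩
    · exact Set.disjoint_left.2 fun x hx hx2 => hx2.2 (subset_closure hx)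
  · push_neg at h
    exfalso
    obtain ⟨z, hz, z', hz', hne⟩ := hGi.nontrivial
    obtain ⟨W, W', hWo, hW'o, hzW, hz'W', hd⟩ := t2_separation hne
    have hfin : ((G ∩ D) \ W).Finite := h z hz W hWo hzW
    have hfin' : ((G ∩ D) \ W').Finite := h z' hz' W' hW'o hz'W'
    refine hGi ((hfin.union hfin').subset fun x hx => ?_)
    by_cases hxW : x ∈ W
    · exact Or.inr ⟨hx, fun hc => (Set.disjoint_left.1 hd hxW) hc⟩
    · exact Or.inl ⟨hx, hxW⟩

/-- Countably many pairwise disjoint nonempty open sets, each meeting `D`. -/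
lemma exists_disjoint_opens (D : Set K) (hD : D.Infinite) :
    ∃ U : ℕ → Set K, (∀ n, IsOpen (U n)) ∧
      (∀ m n, m ≠ n → ∀ x, x ∈ U m → x ∉ U n) ∧ (∀ n, (U n ∩ D).Nonempty) := by
  set T : Set K × Set K → Prop := fun p =>
    IsOpen p.1 ∧ IsOpen p.2 ∧ (p.2 ∩ D).Infinite ∧ (p.1 ∩ D).Nonempty with hT
  set N : Set K × Set K → Set K × Set K → Prop := fun p q =>
    q.1 ⊆ p.2 ∧ q.2 ⊆ p.2 ∧ Disjoint q.1 q.2 with hN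
  have hinit : T (univ, univ) := ⟨isOpen_univ, isOpen_univ, by simpa using hD,
    by simpa using hD.nonempty⟩
  obtain ⟨f, hf0, hfT, hfN⟩ := exists_chain (T := T) (N := N) (univ, univ) hinit
    (fun p hp => by
      obtain ⟨q, hq1, hq2⟩ := L1step D p.2 hp.2.1 hp.2.2.1
      exact ⟨q, hq1, hq2⟩)
  -- chain of inclusions for the second components
  have hchain : ∀ i j, i ≤ j → (f j).2 ⊆ (f i).2 := by
    intro i j hij
    induction hij with
    | refl => exact subset_rfl
    | step h ih => exact fun x hx => ih ((hfN _).2.1 hx)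
  refine ⟨fun n => (f (n + 1)).1, fun n => (hfT (n + 1)).1, ?_, fun n => (hfT (n + 1)).2.2.2⟩
  have key : ∀ m n, m < n → ∀ x, x ∈ (f (m + 1)).1 → x ∉ (f (n + 1)).1 := by
    intro m n hmn x hxm hxn
    have h1 : (f (n + 1)).1 ⊆ (f n).2 := (hfN n).1
    have h2 : (f n).2 ⊆ (f (m + 1)).2 := hchain (m + 1) n hmn
    exact Set.disjoint_left.1 (hfN m).2.2 hxm (h2 (h1 hxn))
  intro m n hmn x hxm hxn
  rcases hmn.lt_or_gt with h | h
  · exact key m n h x hxm hxn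
  · exact key n m h x hxn hxm

omit [CompactSpace K] in
/-- Countably many pairwise disjoint nonempty opens inside a neighbourhood of an
accumulation point, with marked points. -/
lemma exists_fan (G : Set K) (hG : IsOpen G) {z : K} (hzG : z ∈ G)
    (hz : z ∈ derivedSet (univ : Set K)) :
    ∃ (A : ℕ → Set K) (q : ℕ → K), (∀ j, IsOpen (A j)) ∧ (∀ j, A j ⊆ G) ∧
      (∀ j, q j ∈ A j) ∧ (∀ i j, i ≠ j → ∀ x, x ∈ A i → x ∉ A j) := by
  set T : (Set K × K) × Set K → Prop := fun p =>
    IsOpen p.1.1 ∧ IsOpen p.2 ∧ z ∈ p.2 ∧ p.1.2 ∈ p.1.1 with hT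
  set N : (Set K × K) × Set K → (Set K × K) × Set K → Prop := fun p q =>
    q.1.1 ⊆ p.2 ∧ q.2 ⊆ p.2 ∧ Disjoint q.1.1 q.2 with hN
  have hacc : ∀ H : Set K, IsOpen H → z ∈ H → ∃ y ∈ H, y ≠ z := by
    intro H hHo hzH
    have := accPt_iff_nhds.1 (show AccPt z (𝓟 univ) from hz) H (hHo.mem_nhds hzH)
    obtain ⟨y, ⟨hyH, -⟩, hy⟩ := this
    exact ⟨y, hyH, hy⟩
  obtain ⟨f, hf0, hfT, hfN⟩ := exists_chain (T := T) (N := N) ((G, z), G)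
    ⟨hG, hG, hzG, hzG⟩
    (fun p hp => by
      obtain ⟨y, hyH, hy⟩ := hacc p.2 hp.2.1 hp.2.2.1
      obtain ⟨V, V', hVo, hV'o, hyV, hzV', hd⟩ := t2_separation hy
      refine ⟨⟨⟨V ∩ p.2, y⟩, V' ∩ p.2⟩,
        ⟨hVo.inter hp.2.1, hV'o.inter hp.2.1, ⟨hzV', hp.2.2.1⟩, ⟨hyV, hyH⟩⟩,
        inter_subset_right, inter_subset_right, ?_⟩
      exact hd.mono inter_subset_left inter_subset_left)
  have hchain : ∀ i j, i ≤ j → (f j).2 ⊆ (f i).2 := by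
    intro i j hij
    induction hij with
    | refl => exact subset_rfl
    | step h ih => exact fun x hx => ih ((hfN _).2.1 hx)
  have hsubG : ∀ j, (f (j + 1)).1.1 ⊆ G := by
    intro j x hx
    have h1 : (f (j + 1)).1.1 ⊆ (f j).2 := (hfN j).1
    have h2 : (f j).2 ⊆ (f 0).2 := hchain 0 j (Nat.zero_le j)
    rw [hf0] at h2
    exact h2 (h1 hx)
  refine ⟨fun j => (f (j + 1)).1.1, fun j => (f (j + 1)).1.2, fun j => (hfT (j + 1)).1,
    hsubG, fun j => (hfT (j + 1)).2.2.2, ?_⟩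
  have key : ∀ i j, i < j → ∀ x, x ∈ (f (i + 1)).1.1 → x ∉ (f (j + 1)).1.1 := by
    intro i j hij x hxi hxj
    have h1 : (f (j + 1)).1.1 ⊆ (f j).2 := (hfN j).1
    have h2 : (f j).2 ⊆ (f (i + 1)).2 := hchain (i + 1) j hij
    exact Set.disjoint_left.1 (hfN i).2.2 hxi (h2 (h1 hxj))
  intro i j hij x hxi hxj
  rcases hij.lt_or_gt with h | h
  · exact key i j h x hxi hxj
  · exact key j i h x hxj hxi
noncomputable section

/-- Measurement signs: `1` and `I`. -/
def sgn (𝕜 : Type*) [RCLike 𝕜] : Fin 2 → 𝕜 := fun s => if s = 0 then 1 else RCLike.I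

lemma norm_I_le_one (𝕜 : Type*) [RCLike 𝕜] : ‖(RCLike.I : 𝕜)‖ ≤ 1 := by
  rcases (RCLike.I_mul_I_ax (K := 𝕜)) with h | h
  · simp [h]
  · have h2 : ‖(RCLike.I : 𝕜)‖ * ‖(RCLike.I : 𝕜)‖ = 1 := by
      rw [← norm_mul, h, norm_neg, norm_one]
    nlinarith [norm_nonneg (RCLike.I : 𝕜)]

lemma norm_sgn_le (𝕜 : Type*) [RCLike 𝕜] (s : Fin 2) : ‖sgn 𝕜 s‖ ≤ 1 := by
  unfold sgn
  split
  · simp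
  · exact norm_I_le_one 𝕜

/-- Real continuous map into `𝕜`. -/
def toK (𝕜 : Type*) [RCLike 𝕜] {K : Type*} [TopologicalSpace K] (f : C(K, ℝ)) : C(K, 𝕜) :=
  ⟨fun x => (f x : 𝕜), RCLike.continuous_ofReal.comp f.continuous⟩

@[simp] lemma toK_apply (𝕜 : Type*) [RCLike 𝕜] {K : Type*} [TopologicalSpace K]
    (f : C(K, ℝ)) (x : K) : toK 𝕜 f x = (f x : 𝕜) := rfl

variable {K : Type*} [TopologicalSpace K] [CompactSpace K] [T2Space K]

lemma exists_psi (𝕜 : Type*) [RCLike 𝕜]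
    (hinf : (derivedSet (Set.univ : Set K)).Infinite) :
    ∃ (ψ : ℕ → C(K, 𝕜)) (p : ℕ → K) (q : ℕ → ℕ → Fin 2 → K),
      (∀ (F : Finset ℕ) (x : K), ∑ k ∈ F, ‖ψ k x‖ ≤ 1) ∧
      (∀ n, ψ n (p n) = 1) ∧ (∀ n k, k ≠ n → ψ k (p n) = 0) ∧
      (∀ n m, n < m → ∀ s : Fin 2, ψ n (q n m s) = 2⁻¹) ∧
      (∀ n m, n < m → ∀ s : Fin 2, ψ m (q n m s) = sgn 𝕜 s * 2⁻¹) ∧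
      (∀ n m, n < m → ∀ s : Fin 2, ∀ k, k ≠ n → k ≠ m → ψ k (q n m s) = 0) := by
  classical
  obtain ⟨U, hUo, hUd, hUD⟩ := exists_disjoint_opens (derivedSet (Set.univ : Set K)) hinf
  choose z hz using hUD
  choose B hBo hzB hBc using fun n => shrink_open (hUo n) (hz n).1
  choose A qq hAo hAB hqA hAd using fun n => exists_fan (B n) (hBo n) (hzB n) (hz n).2
  -- theta functions
  have hthex : ∀ n, ∃ f : C(K, ℝ), EqOn f 0 (U n)ᶜ ∧ EqOn f 1 (closure (B n)) ∧
      ∀ x, f x ∈ Icc (0:ℝ) 1 := by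
    intro n
    refine exists_continuous_zero_one_of_isClosed (hUo n).isClosed_compl isClosed_closure ?_
    exact Set.disjoint_left.2 fun x hx hc => hx (hBc n hc)
  choose theta hth0 hth1 hth01 using hthex
  -- bump functions
  have hbex : ∀ n j, ∃ f : C(K, ℝ), EqOn f 0 (A n j)ᶜ ∧ EqOn f 1 {qq n j} ∧
      ∀ x, f x ∈ Icc (0:ℝ) 1 := by
    intro n j
    refine exists_continuous_zero_one_of_isClosed (hAo n j).isClosed_compl isClosed_singleton ?_
    exact Set.disjoint_left.2 fun x hx hxq => hx (Set.mem_singleton_iff.1 hxq ▸ hqA n j)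
  choose bump hb0 hb1 hb01 using hbex
  -- derived basic facts
  have hAU : ∀ n j, A n j ⊆ U n := fun n j x hx => hBc n (subset_closure (hAB n j hx))
  have hbA : ∀ n j x, x ∉ A n j → bump n j x = 0 := fun n j x hx => hb0 n j hx
  have hbq : ∀ n j, bump n j (qq n j) = 1 := fun n j => hb1 n j rfl
  have hthB : ∀ n x, x ∈ B n → theta n x = 1 := fun n x hx => hth1 n (subset_closure hx)
  have hthU : ∀ n x, x ∉ U n → theta n x = 0 := fun n x hx => hth0 n hx
  have hbU : ∀ n j x, x ∉ U n → bump n j x = 0 := fun n j x hx =>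
    hbA n j x (fun hc => hx (hAU n j hc))
  -- the functions ψ
  set ψ : ℕ → C(K, 𝕜) := fun n =>
    (2⁻¹ : 𝕜) • (toK 𝕜 (theta n) + toK 𝕜 (bump n 0)) +
      ∑ k ∈ Finset.range n, ∑ s : Fin 2,
        (sgn 𝕜 s * 2⁻¹) • toK 𝕜 (bump k (2 * n + s.val)) with hψ
  have hψx : ∀ n x, ψ n x =
      (2⁻¹ : 𝕜) * ((theta n x : 𝕜) + (bump n 0 x : 𝕜)) +
        ∑ k ∈ Finset.range n, ∑ s : Fin 2,
          (sgn 𝕜 s * 2⁻¹) * (bump k (2 * n + s.val) x : 𝕜) := by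
    intro n x
    simp [hψ, ContinuousMap.sum_apply, smul_eq_mul, mul_add]
  -- evaluation on own fan
  have hpsi_self : ∀ n x, x ∈ U n →
      ψ n x = (2⁻¹ : 𝕜) * ((theta n x : 𝕜) + (bump n 0 x : 𝕜)) := by
    intro n x hx
    rw [hψx]
    have : ∀ k ∈ Finset.range n, ∑ s : Fin 2,
        (sgn 𝕜 s * 2⁻¹) * (bump k (2 * n + s.val) x : 𝕜) = 0 := by
      intro k hk
      have hkn : k ≠ n := Nat.ne_of_lt (Finset.mem_range.1 hk)
      have hxk : x ∉ U k := fun hc => hUd k n hkn x hc hx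
      refine Finset.sum_eq_zero fun s _ => ?_
      rw [hbU k _ x hxk]
      simp
    rw [Finset.sum_eq_zero this, add_zero]
  -- evaluation on other fans
  have hpsi_other : ∀ n k x, x ∈ U n → k ≠ n →
      ψ k x = if n < k then
        ∑ s : Fin 2, (sgn 𝕜 s * 2⁻¹) * (bump n (2 * k + s.val) x : 𝕜) else 0 := by
    intro n k x hx hk
    have hxk : x ∉ U k := fun hc => hUd k n hk x hc hx
    rw [hψx, hthU k x hxk, hbU k 0 x hxk]
    simp only [RCLike.ofReal_zero, add_zero, mul_zero, zero_add]
    by_cases hnk : n < k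
    · rw [if_pos hnk]
      rw [Finset.sum_eq_single n]
      · intro k' hk' hk'n
        have hxk' : x ∉ U k' := fun hc => hUd k' n hk'n x hc hx
        refine Finset.sum_eq_zero fun s _ => ?_
        rw [hbU k' _ x hxk']
        simp
      · intro hn
        exact absurd (Finset.mem_range.2 hnk) hn
    · rw [if_neg hnk]
      refine Finset.sum_eq_zero fun k' hk' => ?_
      have hk'n : k' ≠ n := by
        have := Finset.mem_range.1 hk'
        omega
      have hxk' : x ∉ U k' := fun hc => hUd k' n hk'n x hc hx
      refine Finset.sum_eq_zero fun s _ => ?_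
      rw [hbU k' _ x hxk']
      simp
  have hpsi_zero : ∀ k x, (∀ n, x ∉ U n) → ψ k x = 0 := by
    intro k x hx
    rw [hψx, hthU k x (hx k), hbU k 0 x (hx k)]
    have : ∀ k' ∈ Finset.range k, ∑ s : Fin 2,
        (sgn 𝕜 s * 2⁻¹) * (bump k' (2 * k + s.val) x : 𝕜) = 0 := by
      intro k' _
      refine Finset.sum_eq_zero fun s _ => ?_
      rw [hbU k' _ x (hx k')]
      simp
    rw [Finset.sum_eq_zero this]
    simp
  -- norm bounds
  have hnorm_self : ∀ n x, x ∈ U n →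
      ‖ψ n x‖ ≤ 2⁻¹ * (theta n x + bump n 0 x) := by
    intro n x hx
    rw [hpsi_self n x hx]
    rw [norm_mul]
    have h1 : ‖(2⁻¹ : 𝕜)‖ = 2⁻¹ := by
      rw [show ((2⁻¹ : 𝕜)) = ((2⁻¹ : ℝ) : 𝕜) by push_cast; ring, RCLike.norm_ofReal]
      norm_num
    have h2 : ((theta n x : 𝕜) + (bump n 0 x : 𝕜)) = ((theta n x + bump n 0 x : ℝ) : 𝕜) := by
      push_cast; ring
    rw [h1, h2, RCLike.norm_ofReal, abs_of_nonneg (by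
      have := (hth01 n x).1; have := (hb01 n 0 x).1; linarith)]
  have hnorm_other : ∀ n k x, x ∈ U n → k ≠ n →
      ‖ψ k x‖ ≤ 2⁻¹ * (bump n (2 * k) x + bump n (2 * k + 1) x) := by
    intro n k x hx hk
    rw [hpsi_other n k x hx hk]
    have hb2 : (0:ℝ) ≤ bump n (2 * k) x := (hb01 n _ x).1
    have hb3 : (0:ℝ) ≤ bump n (2 * k + 1) x := (hb01 n _ x).1
    by_cases hnk : n < k
    · rw [if_pos hnk, Fin.sum_univ_two]
      refine le_trans (norm_add_le _ _) ?_
      have key : ∀ (s : Fin 2) (j : ℕ),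
          ‖(sgn 𝕜 s * 2⁻¹) * (bump n j x : 𝕜)‖ ≤ 2⁻¹ * bump n j x := by
        intro s j
        rw [norm_mul, norm_mul, RCLike.norm_ofReal, abs_of_nonneg ((hb01 n j x).1)]
        have h1 : ‖(2⁻¹ : 𝕜)‖ = 2⁻¹ := by
          rw [show ((2⁻¹ : 𝕜)) = ((2⁻¹ : ℝ) : 𝕜) by push_cast; ring, RCLike.norm_ofReal]
          norm_num
        rw [h1]
        have := norm_sgn_le 𝕜 s
        have := (hb01 n j x).1
        nlinarith [norm_nonneg (sgn 𝕜 s)]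
      have k0 := key 0 (2 * k + (0:Fin 2).val)
      have k1 := key 1 (2 * k + (1:Fin 2).val)
      simp only [Fin.val_zero, add_zero, Fin.val_one] at k0 k1
      have : (2:ℝ)⁻¹ * (bump n (2*k) x + bump n (2*k+1) x)
          = 2⁻¹ * bump n (2*k) x + 2⁻¹ * bump n (2*k+1) x := by ring
      rw [this]
      exact add_le_add k0 k1
    · rw [if_neg hnk, norm_zero]
      positivity
  -- bump sum lemma
  have hBL : ∀ (n : ℕ) (x : K) (Jf : Finset ℕ), (∑ j ∈ Jf, bump n j x) ≤ 1 := by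
    intro n x Jf
    by_cases hx : ∃ j₀ ∈ Jf, x ∈ A n j₀
    · obtain ⟨j₀, hj₀, hxj₀⟩ := hx
      rw [Finset.sum_eq_single j₀ (fun j _ hne => hbA n j x (hAd n j₀ j (Ne.symm hne) x hxj₀))
        (fun h => absurd hj₀ h)]
      exact (hb01 n j₀ x).2
    · push_neg at hx
      rw [Finset.sum_eq_zero fun j hj => hbA n j x (hx j hj)]
      norm_num
  -- H1
  have H1 : ∀ (F : Finset ℕ) (x : K), ∑ k ∈ F, ‖ψ k x‖ ≤ 1 := by
    intro F x
    by_cases hx : ∃ n, x ∈ U n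
    · obtain ⟨n, hxn⟩ := hx
      rw [← Finset.sum_filter_add_sum_filter_not F (fun k => n < k)]
      have hsecond : ∑ k ∈ F.filter (fun k => ¬ n < k), ‖ψ k x‖
          ≤ 2⁻¹ * (theta n x + bump n 0 x) := by
        have hb : ∀ k ∈ F.filter (fun k => ¬ n < k), ‖ψ k x‖ ≤
            if k = n then 2⁻¹ * (theta n x + bump n 0 x) else 0 := by
          intro k hk
          rcases eq_or_ne k n with rfl | hkn
          · rw [if_pos rfl]; exact hnorm_self k x hxn
          · rw [if_neg hkn]
            have := Finset.mem_filter.1 hk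
            rw [hpsi_other n k x hxn hkn, if_neg this.2, norm_zero]
        refine le_trans (Finset.sum_le_sum hb) ?_
        rw [Finset.sum_ite_eq' (F.filter (fun k => ¬ n < k)) n
          (fun _ => 2⁻¹ * (theta n x + bump n 0 x))]
        split
        · exact le_refl _
        · have := (hth01 n x).1; have := (hb01 n 0 x).1; positivity
      have hfirst : ∑ k ∈ F.filter (fun k => n < k), ‖ψ k x‖
          ≤ 2⁻¹ * ∑ j ∈ (F.filter (fun k => n < k)).biUnion
              (fun k => {2 * k, 2 * k + 1}), bump n j x := by
        have h1 : ∑ k ∈ F.filter (fun k => n < k), ‖ψ k x‖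
            ≤ ∑ k ∈ F.filter (fun k => n < k),
              2⁻¹ * (bump n (2 * k) x + bump n (2 * k + 1) x) := by
          refine Finset.sum_le_sum fun k hk => ?_
          have hkF := Finset.mem_filter.1 hk
          exact hnorm_other n k x hxn (Nat.ne_of_gt hkF.2)
        refine le_trans h1 ?_
        rw [Finset.sum_biUnion]
        · rw [← Finset.mul_sum]
          refine mul_le_mul_of_nonneg_left ?_ (by norm_num)
          refine Finset.sum_le_sum fun k _ => ?_
          rw [Finset.sum_pair (by omega : 2 * k ≠ 2 * k + 1)]
        · intro a _ b _ hab
          simp only [Function.onFun]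
          rw [Finset.disjoint_left]
          intro j hj hj2
          simp only [Finset.mem_insert, Finset.mem_singleton] at hj hj2
          omega
      refine le_trans (add_le_add hfirst hsecond) ?_
      have h0mem : (0:ℕ) ∉ (F.filter (fun k => n < k)).biUnion
          (fun k => ({2 * k, 2 * k + 1} : Finset ℕ)) := by
        simp only [Finset.mem_biUnion, Finset.mem_filter, Finset.mem_insert,
          Finset.mem_singleton, not_exists]
        intro k hk
        omega
      have hsum : bump n 0 x + ∑ j ∈ (F.filter (fun k => n < k)).biUnion
          (fun k => {2 * k, 2 * k + 1}), bump n j x ≤ 1 := by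
        have h := hBL n x (insert 0 ((F.filter (fun k => n < k)).biUnion
          (fun k => {2 * k, 2 * k + 1})))
        rwa [Finset.sum_insert h0mem] at h
      have hth := (hth01 n x).2
      have hb0' := (hb01 n 0 x).1
      have hsnn : (0:ℝ) ≤ ∑ j ∈ (F.filter (fun k => n < k)).biUnion
          (fun k => {2 * k, 2 * k + 1}), bump n j x :=
        Finset.sum_nonneg fun j _ => (hb01 n j x).1
      nlinarith
    · push_neg at hx
      rw [Finset.sum_eq_zero fun k _ => by rw [hpsi_zero k x hx, norm_zero]]
      norm_num
  -- points
  refine ⟨ψ, fun n => qq n 0, fun n m s => qq n (2 * m + s.val), H1, ?_, ?_, ?_, ?_, ?_⟩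
  · -- H2a
    intro n
    have hxB : qq n 0 ∈ B n := hAB n 0 (hqA n 0)
    have hxU : qq n 0 ∈ U n := hAU n 0 (hqA n 0)
    rw [hpsi_self n _ hxU, hthB n _ hxB, hbq n 0]
    norm_num
  · -- H2b
    intro n k hk
    have hxU : qq n 0 ∈ U n := hAU n 0 (hqA n 0)
    rw [hpsi_other n k _ hxU hk]
    by_cases hnk : n < k
    · rw [if_pos hnk]
      refine Finset.sum_eq_zero fun s _ => ?_
      have : qq n 0 ∉ A n (2 * k + s.val) :=
        hAd n 0 (2 * k + s.val) (by omega) _ (hqA n 0)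
      rw [hbA n _ _ this]
      simp
    · rw [if_neg hnk]
  · -- H3a
    intro n m hnm s
    have hxA : qq n (2 * m + s.val) ∈ A n (2 * m + s.val) := hqA n _
    have hxB : qq n (2 * m + s.val) ∈ B n := hAB n _ hxA
    have hxU : qq n (2 * m + s.val) ∈ U n := hAU n _ hxA
    rw [hpsi_self n _ hxU, hthB n _ hxB,
      hbA n 0 _ (hAd n (2 * m + s.val) 0 (by omega) _ hxA)]
    norm_num
  · -- H3b
    intro n m hnm s
    have hxA : qq n (2 * m + s.val) ∈ A n (2 * m + s.val) := hqA n _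
    have hxU : qq n (2 * m + s.val) ∈ U n := hAU n _ hxA
    rw [hpsi_other n m _ hxU (Nat.ne_of_gt hnm), if_pos hnm]
    have hz : ∀ s' : Fin 2, s' ≠ s →
        (sgn 𝕜 s' * 2⁻¹) * ((bump n (2 * m + s'.val) (qq n (2 * m + s.val)) : ℝ) : 𝕜) = 0 := by
      intro s' hs'
      have hne : 2 * m + s.val ≠ 2 * m + s'.val := by
        intro h
        exact hs' (Fin.ext (by omega)).symm
      rw [hbA n _ _ (hAd n (2 * m + s.val) (2 * m + s'.val) hne _ hxA)]
      simp
    rw [Finset.sum_eq_single s (fun s' _ h => hz s' h)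
      (fun h => absurd (Finset.mem_univ s) h), hbq]
    simp
  · -- H3c
    intro n m hnm s k hkn hkm
    have hxA : qq n (2 * m + s.val) ∈ A n (2 * m + s.val) := hqA n _
    have hxU : qq n (2 * m + s.val) ∈ U n := hAU n _ hxA
    rw [hpsi_other n k _ hxU hkn]
    by_cases hnk : n < k
    · rw [if_pos hnk]
      refine Finset.sum_eq_zero fun s' _ => ?_
      have hne : 2 * m + s.val ≠ 2 * k + s'.val := by
        have := s.isLt; have := s'.isLt; omega
      have : qq n (2 * m + s.val) ∉ A n (2 * k + s'.val) :=
        hAd n (2 * m + s.val) (2 * k + s'.val) hne _ hxA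
      rw [hbA n _ _ this]
      simp
    · rw [if_neg hnk]

end



section analysis

variable {𝕜 : Type*} [RCLike 𝕜]

open RCLike

local notation "conj" => starRingEnd 𝕜

lemma sq_diff_le {x y : 𝕜} {R c : ℝ} (hx : ‖x‖ ≤ R) (hy : ‖y‖ ≤ R)
    (h : |‖x‖ - ‖y‖| ≤ c) : |‖x‖ ^ 2 - ‖y‖ ^ 2| ≤ 2 * R * c := by
  rw [abs_le] at h ⊢
  constructor <;> nlinarith [norm_nonneg x, norm_nonneg y]

lemma re_formula (u v : 𝕜) :
    re (conj u * v) = (‖u + v‖ ^ 2 - ‖u‖ ^ 2 - ‖v‖ ^ 2) / 2 := by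
  simp only [norm_sq_eq_def, map_add, mul_re, conj_re, conj_im]
  ring

lemma reDiff {x y x' y' : 𝕜} {δ R : ℝ} (hδ : 0 ≤ δ) (hR : 0 ≤ R)
    (hx : ‖x‖ ≤ R) (hy : ‖y‖ ≤ R) (hx' : ‖x'‖ ≤ R) (hy' : ‖y'‖ ≤ R)
    (ha : |‖x‖ - ‖x'‖| ≤ δ) (hb : |‖y‖ - ‖y'‖| ≤ δ)
    (hc : |‖x + y‖ - ‖x' + y'‖| ≤ 2 * δ) :
    |re (conj x * y) - re (conj x' * y')| ≤ 6 * R * δ := by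
  have h1 : |‖x + y‖ ^ 2 - ‖x' + y'‖ ^ 2| ≤ 2 * (2 * R) * (2 * δ) :=
    sq_diff_le (le_trans (norm_add_le _ _) (by linarith))
      (le_trans (norm_add_le _ _) (by linarith)) hc
  have h2 : |‖x‖ ^ 2 - ‖x'‖ ^ 2| ≤ 2 * R * δ := sq_diff_le hx hx' ha
  have h3 : |‖y‖ ^ 2 - ‖y'‖ ^ 2| ≤ 2 * R * δ := sq_diff_le hy hy' hb
  rw [re_formula, re_formula]
  rw [abs_le] at h1 h2 h3 ⊢
  constructor <;> [linarith; linarith]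

lemma norm_le_re_add_im (z : 𝕜) : ‖z‖ ≤ |re z| + |im z| := by
  have h : ‖z‖ ^ 2 = re z * re z + im z * im z := norm_sq_eq_def
  nlinarith [norm_nonneg z, abs_nonneg (re z), abs_nonneg (im z),
    sq_abs (re z), sq_abs (im z), neg_abs_le (re z), le_abs_self (re z),
    neg_abs_le (im z), le_abs_self (im z), sq_nonneg (‖z‖ - |re z| - |im z|)]

lemma core2D {u v u' v' : 𝕜} {δ R : ℝ} (hδ : 0 ≤ δ) (hR : 0 ≤ R)
    (hRu : ‖u‖ ≤ R) (hRv : ‖v‖ ≤ R) (hRu' : ‖u'‖ ≤ R) (hRv' : ‖v'‖ ≤ R)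
    (h0 : ‖u - u'‖ ≤ δ) (h2 : |‖v‖ - ‖v'‖| ≤ δ)
    (h3 : |‖u + v‖ - ‖u' + v'‖| ≤ 2 * δ)
    (h4 : |‖u + I * v‖ - ‖u' + I * v'‖| ≤ 2 * δ ∨
          |‖v + I * u‖ - ‖v' + I * u'‖| ≤ 2 * δ) :
    ‖u‖ * ‖v - v'‖ ≤ 13 * R * δ := by
  have h1 : |‖u‖ - ‖u'‖| ≤ δ := le_trans (abs_norm_sub_norm_le u u') h0
  set w := conj u * v with hw
  set w' := conj u' * v' with hw'
  have hIle : ‖(I : 𝕜)‖ ≤ 1 := norm_I_le_one 𝕜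
  have hre : |re w - re w'| ≤ 6 * R * δ := reDiff hδ hR hRu hRv hRu' hRv' h1 h2 h3
  have hIv : ‖I * v‖ ≤ R := by
    rw [norm_mul]
    nlinarith [norm_nonneg (I : 𝕜), norm_nonneg v]
  have hIv' : ‖I * v'‖ ≤ R := by
    rw [norm_mul]
    nlinarith [norm_nonneg (I : 𝕜), norm_nonneg v']
  have hIu : ‖I * u‖ ≤ R := by
    rw [norm_mul]
    nlinarith [norm_nonneg (I : 𝕜), norm_nonneg u]
  have hIu' : ‖I * u'‖ ≤ R := by
    rw [norm_mul]
    nlinarith [norm_nonneg (I : 𝕜), norm_nonneg u']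
  have hIdiff_v : |‖I * v‖ - ‖I * v'‖| ≤ δ := by
    rw [norm_mul, norm_mul, ← mul_sub, abs_mul, abs_norm]
    calc ‖(I:𝕜)‖ * |‖v‖ - ‖v'‖| ≤ 1 * δ :=
          mul_le_mul hIle h2 (abs_nonneg _) zero_le_one
      _ = δ := one_mul δ
  have hIdiff_u : |‖I * u‖ - ‖I * u'‖| ≤ δ := by
    rw [norm_mul, norm_mul, ← mul_sub, abs_mul, abs_norm]
    calc ‖(I:𝕜)‖ * |‖u‖ - ‖u'‖| ≤ 1 * δ :=
          mul_le_mul hIle h1 (abs_nonneg _) zero_le_one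
      _ = δ := one_mul δ
  -- imaginary parts
  have hreI : ∀ z : 𝕜, re ((I : 𝕜) * z) = -im z := by
    intro z
    rw [RCLike.mul_re, RCLike.I_re, RCLike.I_im']
    ring
  have him : |im w - im w'| ≤ 6 * R * δ := by
    rcases h4 with h4 | h4
    · have := reDiff hδ hR hRu hIv hRu' hIv' h1 hIdiff_v h4
      have e1 : conj u * (I * v) = I * w := by rw [hw]; ring
      have e2 : conj u' * (I * v') = I * w' := by rw [hw']; ring
      rw [e1, e2, hreI, hreI] at this
      calc |im w - im w'| = |(-im w) - (-im w')| := by rw [← abs_neg]; ring_nf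
        _ ≤ 6 * R * δ := this
    · have := reDiff hδ hR hRv hIu hRv' hIu' h2 hIdiff_u h4
      have e1 : conj v * (I * u) = I * conj w := by
        rw [hw, map_mul, RCLike.conj_conj]; ring
      have e2 : conj v' * (I * u') = I * conj w' := by
        rw [hw', map_mul, RCLike.conj_conj]; ring
      rw [e1, e2, hreI, hreI, RCLike.conj_im, RCLike.conj_im] at this
      calc |im w - im w'| = |(- -im w) - (- -im w')| := by ring_nf
        _ ≤ 6 * R * δ := this
  have hwdiff : ‖w - w'‖ ≤ 12 * R * δ := by
    calc ‖w - w'‖ ≤ |re (w - w')| + |im (w - w')| := norm_le_re_add_im _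
      _ = |re w - re w'| + |im w - im w'| := by rw [map_sub, map_sub]
      _ ≤ 6 * R * δ + 6 * R * δ := add_le_add hre him
      _ = 12 * R * δ := by ring
  have hfactor : conj u * (v - v') = (w - w') - (conj u - conj u') * v' := by
    rw [hw, hw']; ring
  have hnorm_eq : ‖u‖ * ‖v - v'‖ = ‖conj u * (v - v')‖ := by
    rw [norm_mul, RCLike.norm_conj]
  rw [hnorm_eq, hfactor]
  calc ‖(w - w') - (conj u - conj u') * v'‖
      ≤ ‖w - w'‖ + ‖(conj u - conj u') * v'‖ := norm_sub_le _ _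
    _ ≤ 12 * R * δ + δ * R := by
        refine add_le_add hwdiff ?_
        rw [norm_mul, ← map_sub, RCLike.norm_conj]
        exact mul_le_mul h0 hRv' (norm_nonneg _) hδ
    _ = 13 * R * δ := by ring

end analysis

section stability

open scoped ZeroAtInfty

variable {𝕜 : Type*} [RCLike 𝕜]

lemma c0_apply_le_norm (a : C₀(ℕ, 𝕜)) (n : ℕ) : ‖a n‖ ≤ ‖a‖ := by
  rw [← ZeroAtInftyContinuousMap.norm_toBCF_eq_norm]
  exact BoundedContinuousFunction.norm_coe_le_norm a.toBCF n

lemma c0_norm_le (a : C₀(ℕ, 𝕜)) {C : ℝ} (hC : 0 ≤ C) (h : ∀ n, ‖a n‖ ≤ C) : ‖a‖ ≤ C := by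
  rw [← ZeroAtInftyContinuousMap.norm_toBCF_eq_norm]
  exact BoundedContinuousFunction.norm_le hC |>.2 h

lemma stability (a b : C₀(ℕ, 𝕜)) {δ : ℝ} (hδ : 0 ≤ δ)
    (h1 : ∀ n, |‖a n‖ - ‖b n‖| ≤ δ)
    (h2 : ∀ n m, n < m → ∀ s : Fin 2,
      |‖a n + sgn 𝕜 s * a m‖ - ‖b n + sgn 𝕜 s * b m‖| ≤ 2 * δ) :
    ∃ lam : 𝕜, ‖lam‖ = 1 ∧ ∀ n, ‖a n - lam * b n‖ ≤ 25 * δ := by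
  have hsgn0 : sgn 𝕜 0 = 1 := rfl
  have hsgn1 : sgn 𝕜 1 = RCLike.I := rfl
  set M := ‖a‖ with hM
  have hM0 : 0 ≤ M := norm_nonneg a
  have haM : ∀ n, ‖a n‖ ≤ M := c0_apply_le_norm a
  have hbM : ∀ n, ‖b n‖ ≤ M + δ := by
    intro n
    have := abs_le.1 (h1 n)
    have := haM n
    linarith
  by_cases hMδ : M ≤ 4 * δ
  · refine ⟨1, norm_one, fun n => ?_⟩
    rw [one_mul]
    calc ‖a n - b n‖ ≤ ‖a n‖ + ‖b n‖ := norm_sub_le _ _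
      _ ≤ M + (M + δ) := add_le_add (haM n) (hbM n)
      _ ≤ 25 * δ := by linarith
  · push_neg at hMδ
    have hδM : 4 * δ < M := hMδ
    have hMpos : 0 < M := lt_of_le_of_lt (by linarith) hδM
    have hN : ∃ N, (4 / 5) * M < ‖a N‖ := by
      by_contra hcon
      push_neg at hcon
      have : ‖a‖ ≤ (4 / 5) * M := c0_norm_le a (by linarith) hcon
      rw [← hM] at this
      linarith
    obtain ⟨N, hNa⟩ := hN
    set ρ := ‖a N‖ with hρ
    have hρM : ρ ≤ M := haM N
    have hρpos : 0 < ρ := lt_of_le_of_lt (by linarith) hNa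
    have hρδ : 3 * δ < ρ := by
      have : 3 * δ < (4 / 5) * M := by linarith
      linarith
    have hbN : ρ - δ ≤ ‖b N‖ := by
      have := abs_le.1 (h1 N)
      linarith
    have hbNpos : 0 < ‖b N‖ := lt_of_lt_of_le (by linarith) hbN
    set lam : 𝕜 := (a N * (starRingEnd 𝕜) (b N)) / ((ρ * ‖b N‖ : ℝ) : 𝕜) with hlam
    have hρbne : ((ρ * ‖b N‖ : ℝ) : 𝕜) ≠ 0 := by
      rw [ne_eq, RCLike.ofReal_eq_zero]
      positivity
    have hlamnorm : ‖lam‖ = 1 := by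
      rw [hlam, norm_div, norm_mul, RCLike.norm_conj, RCLike.norm_ofReal,
        abs_of_pos (by positivity), ← hρ]
      field_simp
    have hkey : lam * b N = ((‖b N‖ / ρ : ℝ) : 𝕜) * a N := by
      rw [hlam]
      have hconj : (starRingEnd 𝕜) (b N) * b N = ((‖b N‖ : ℝ) : 𝕜) ^ 2 := by
        rw [mul_comm, RCLike.mul_conj]
      have hρne : ((ρ : ℝ) : 𝕜) ≠ 0 := by
        rw [ne_eq, RCLike.ofReal_eq_zero]
        positivity
      have hbne : ((‖b N‖ : ℝ) : 𝕜) ≠ 0 := by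
        rw [ne_eq, RCLike.ofReal_eq_zero]
        positivity
      rw [div_mul_eq_mul_div, mul_assoc, hconj, div_eq_iff hρbne]
      push_cast
      field_simp
      try ring
    have hNbound : ‖a N - lam * b N‖ ≤ δ := by
      rw [hkey]
      have : a N - ((‖b N‖ / ρ : ℝ) : 𝕜) * a N = (((1 - ‖b N‖ / ρ : ℝ)) : 𝕜) * a N := by
        push_cast
        ring
      rw [this, norm_mul, RCLike.norm_ofReal, ← hρ]
      have heq : (1 - ‖b N‖ / ρ) * ρ = ρ - ‖b N‖ := by field_simp
      have habs : |1 - ‖b N‖ / ρ| * ρ = |ρ - ‖b N‖| := by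
        calc |1 - ‖b N‖ / ρ| * ρ = |1 - ‖b N‖ / ρ| * |ρ| := by rw [abs_of_pos hρpos]
          _ = |(1 - ‖b N‖ / ρ) * ρ| := (abs_mul _ _).symm
          _ = |ρ - ‖b N‖| := by rw [heq]
      rw [habs, hρ]
      exact h1 N
    have hlbn : ∀ n, ‖lam * b n‖ = ‖b n‖ := by
      intro n
      rw [norm_mul, hlamnorm, one_mul]
    refine ⟨lam, hlamnorm, fun n => ?_⟩
    rcases eq_or_ne n N with rfl | hnN
    · linarith [hNbound]
    · -- apply core2D
      have hcore : ρ * ‖a n - lam * b n‖ ≤ 13 * (M + δ) * δ := by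
        have hRu : ‖a N‖ ≤ M + δ := by linarith
        have hRv : ‖a n‖ ≤ M + δ := by linarith [haM n]
        have hRu' : ‖lam * b N‖ ≤ M + δ := by rw [hlbn]; exact hbM N
        have hRv' : ‖lam * b n‖ ≤ M + δ := by rw [hlbn]; exact hbM n
        have h2' : |‖a n‖ - ‖lam * b n‖| ≤ δ := by rw [hlbn]; exact h1 n
        have h3' : |‖a N + a n‖ - ‖lam * b N + lam * b n‖| ≤ 2 * δ := by
          have he : lam * b N + lam * b n = lam * (b N + b n) := by ring
          rw [he, norm_mul, hlamnorm, one_mul]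
          rcases lt_or_gt_of_ne hnN with h | h
          · rw [add_comm (a N) (a n), add_comm (b N) (b n)]
            have := h2 n N h 0
            rwa [hsgn0, one_mul, one_mul] at this
          · have := h2 N n h 0
            rwa [hsgn0, one_mul, one_mul] at this
        have h4' : |‖a N + RCLike.I * a n‖ - ‖lam * b N + RCLike.I * (lam * b n)‖| ≤ 2 * δ ∨
            |‖a n + RCLike.I * a N‖ - ‖lam * b n + RCLike.I * (lam * b N)‖| ≤ 2 * δ := by
          rcases lt_or_gt_of_ne hnN with h | h
          · right
            have he : lam * b n + RCLike.I * (lam * b N) = lam * (b n + RCLike.I * b N) := by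
              ring
            rw [he, norm_mul, hlamnorm, one_mul]
            have := h2 n N h 1
            rwa [hsgn1] at this
          · left
            have he : lam * b N + RCLike.I * (lam * b n) = lam * (b N + RCLike.I * b n) := by
              ring
            rw [he, norm_mul, hlamnorm, one_mul]
            have := h2 N n h 1
            rwa [hsgn1] at this
        have := core2D (u := a N) (v := a n) (u' := lam * b N) (v' := lam * b n)
          hδ (by linarith) hRu hRv hRu' hRv' hNbound h2' h3' h4'
        rwa [← hρ] at this
      have hXnn : 0 ≤ ‖a n - lam * b n‖ := norm_nonneg _
      nlinarith
end stability

section main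


variable {𝕜 : Type*} [RCLike 𝕜] {K : Type*} [TopologicalSpace K] [CompactSpace K] [T2Space K]

lemma norm_two_inv_K (𝕜 : Type*) [RCLike 𝕜] : ‖(2⁻¹ : 𝕜)‖ = 2⁻¹ := by
  rw [show ((2⁻¹ : 𝕜)) = ((2⁻¹ : ℝ) : 𝕜) by push_cast; ring, RCLike.norm_ofReal]
  norm_num

lemma main_of_psi (ψ : ℕ → C(K, 𝕜)) (p : ℕ → K) (q : ℕ → ℕ → Fin 2 → K)
    (H1 : ∀ (F : Finset ℕ) (x : K), ∑ k ∈ F, ‖ψ k x‖ ≤ 1)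
    (H2a : ∀ n, ψ n (p n) = 1) (H2b : ∀ n k, k ≠ n → ψ k (p n) = 0)
    (H3a : ∀ n m, n < m → ∀ s : Fin 2, ψ n (q n m s) = 2⁻¹)
    (H3b : ∀ n m, n < m → ∀ s : Fin 2, ψ m (q n m s) = sgn 𝕜 s * 2⁻¹)
    (H3c : ∀ n m, n < m → ∀ s : Fin 2, ∀ k, k ≠ n → k ≠ m → ψ k (q n m s) = 0) :
    ∃ J : C₀(ℕ, 𝕜) →ₗᵢ[𝕜] C(K, 𝕜), DoesSPR (LinearMap.range J.toLinearMap) := by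
  classical
  have hFbound : ∀ (c : ℕ → 𝕜) (B : ℝ) (F : Finset ℕ), 0 ≤ B → (∀ k ∈ F, ‖c k‖ ≤ B) →
      ‖∑ k ∈ F, c k • ψ k‖ ≤ B := by
    intro c B F hB h
    rw [ContinuousMap.norm_le _ hB]
    intro x
    have he : (∑ k ∈ F, c k • ψ k) x = ∑ k ∈ F, c k • ψ k x := by
      simp [ContinuousMap.sum_apply]
    rw [he]
    calc ‖∑ k ∈ F, c k • ψ k x‖ ≤ ∑ k ∈ F, ‖c k • ψ k x‖ := norm_sum_le _ _
      _ = ∑ k ∈ F, ‖c k‖ * ‖ψ k x‖ := by simp [norm_smul]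
      _ ≤ ∑ k ∈ F, B * ‖ψ k x‖ :=
          Finset.sum_le_sum fun k hk => mul_le_mul_of_nonneg_right (h k hk) (norm_nonneg _)
      _ = B * ∑ k ∈ F, ‖ψ k x‖ := (Finset.mul_sum _ _ _).symm
      _ ≤ B * 1 := mul_le_mul_of_nonneg_left (H1 F x) hB
      _ = B := mul_one B
  have hsummable : ∀ a : C₀(ℕ, 𝕜), Summable (fun k => a k • ψ k) := by
    intro a
    rw [summable_iff_vanishing_norm]
    intro ε hε
    have hz := a.zero_at_infty'
    rw [Filter.cocompact_eq_cofinite ℕ] at hz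
    have hev : ∀ᶠ n in Filter.cofinite, ‖a n‖ < ε / 2 :=
      (NormedAddCommGroup.tendsto_nhds_zero.mp hz) (ε / 2) (by linarith)
    rw [Filter.eventually_cofinite] at hev
    refine ⟨hev.toFinset, fun t ht => ?_⟩
    have hb : ∀ k ∈ t, ‖a k‖ ≤ ε / 2 := by
      intro k hk
      by_contra hc
      push_neg at hc
      have hmem : k ∈ hev.toFinset := hev.mem_toFinset.2 (not_lt.2 hc.le)
      exact (Finset.disjoint_left.1 ht hk) hmem
    calc ‖∑ k ∈ t, a k • ψ k‖ ≤ ε / 2 := hFbound _ _ t (by linarith) hb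
      _ < ε := by linarith
  set Jf : C₀(ℕ, 𝕜) → C(K, 𝕜) := fun a => ∑' k, a k • ψ k with hJf
  have hHasSum : ∀ a, HasSum (fun k => a k • ψ k) (Jf a) := fun a => (hsummable a).hasSum
  have hevalSum : ∀ (a : C₀(ℕ, 𝕜)) (x : K), HasSum (fun k => a k * ψ k x) (Jf a x) := by
    intro a x
    have h2 := ((continuous_eval_const x).tendsto (Jf a)).comp (hHasSum a)
    refine h2.congr fun F => ?_
    simp [ContinuousMap.sum_apply, smul_eq_mul]
  have hvp : ∀ (a : C₀(ℕ, 𝕜)) (n : ℕ), Jf a (p n) = a n := by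
    intro a n
    rw [← (hevalSum a (p n)).tsum_eq, tsum_eq_single n (fun k hk => by rw [H2b n k hk]; simp)]
    rw [H2a n, mul_one]
  have hvq : ∀ (a : C₀(ℕ, 𝕜)) (n m : ℕ), n < m → ∀ s : Fin 2,
      Jf a (q n m s) = (a n + sgn 𝕜 s * a m) * 2⁻¹ := by
    intro a n m hnm s
    have hnme : n ≠ m := Nat.ne_of_lt hnm
    rw [← (hevalSum a (q n m s)).tsum_eq, tsum_eq_sum (s := {n, m}) ?side]
    case side =>
      intro k hk
      simp only [Finset.mem_insert, Finset.mem_singleton, not_or] at hk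
      rw [H3c n m hnm s k hk.1 hk.2, mul_zero]
    rw [Finset.sum_pair hnme, H3a n m hnm s, H3b n m hnm s]
    ring
  have hnorm_le : ∀ a : C₀(ℕ, 𝕜), ‖Jf a‖ ≤ ‖a‖ := by
    intro a
    have ht : Filter.Tendsto (fun F : Finset ℕ => ‖∑ k ∈ F, a k • ψ k‖)
        Filter.atTop (nhds ‖Jf a‖) := (hHasSum a).norm
    exact le_of_tendsto ht (Filter.Eventually.of_forall fun F =>
      hFbound _ _ F (norm_nonneg a) fun k _ => c0_apply_le_norm a k)
  have hnorm_ge : ∀ a : C₀(ℕ, 𝕜), ‖a‖ ≤ ‖Jf a‖ := by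
    intro a
    refine c0_norm_le a (norm_nonneg _) fun n => ?_
    rw [← hvp a n]
    exact ContinuousMap.norm_coe_le_norm _ _
  let Jlin : C₀(ℕ, 𝕜) →ₗ[𝕜] C(K, 𝕜) :=
  { toFun := Jf
    map_add' := fun a b => by
      have h1 : Jf (a + b) = ∑' k, (a k • ψ k + b k • ψ k) :=
        tsum_congr fun k => by
          rw [show (a + b) k = a k + b k from rfl, add_smul]
      rw [h1, Summable.tsum_add (hsummable a) (hsummable b)]
    map_smul' := fun c a => by
      simp only [RingHom.id_apply]
      have h1 : Jf (c • a) = ∑' k, c • (a k • ψ k) :=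
        tsum_congr fun k => by
          rw [show (c • a) k = c * a k from rfl, mul_smul]
      rw [h1, ((hsummable a).hasSum.const_smul c).tsum_eq] }
  let J : C₀(ℕ, 𝕜) →ₗᵢ[𝕜] C(K, 𝕜) :=
    ⟨Jlin, fun a => le_antisymm (hnorm_le a) (hnorm_ge a)⟩
  refine ⟨J, 25, by norm_num, ?_⟩
  intro f hf g hg
  obtain ⟨a, rfl⟩ := LinearMap.mem_range.1 hf
  obtain ⟨b, rfl⟩ := LinearMap.mem_range.1 hg
  set δ := ‖cmAbs (J.toLinearMap a) - cmAbs (J.toLinearMap b)‖ with hδdef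
  have hδ0 : 0 ≤ δ := norm_nonneg _
  have hJa : J.toLinearMap a = Jf a := rfl
  have hJb : J.toLinearMap b = Jf b := rfl
  have hpt : ∀ x, |‖Jf a x‖ - ‖Jf b x‖| ≤ δ := by
    intro x
    have h := ContinuousMap.norm_coe_le_norm (cmAbs (J.toLinearMap a) - cmAbs (J.toLinearMap b)) x
    rw [← hδdef] at h
    simpa [cmAbs, hJa, hJb, Real.norm_eq_abs] using h
  have h1 : ∀ n, |‖a n‖ - ‖b n‖| ≤ δ := by
    intro n
    have := hpt (p n)
    rwa [hvp, hvp] at this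
  have h2 : ∀ n m, n < m → ∀ s : Fin 2,
      |‖a n + sgn 𝕜 s * a m‖ - ‖b n + sgn 𝕜 s * b m‖| ≤ 2 * δ := by
    intro n m hnm s
    have := hpt (q n m s)
    rw [hvq a n m hnm s, hvq b n m hnm s, norm_mul, norm_mul, norm_two_inv_K] at this
    rw [abs_le] at this ⊢
    constructor <;> [linarith [this.1]; linarith [this.2]]
  obtain ⟨lam, hlam, hb25⟩ := stability a b hδ0 h1 h2
  have hbdd : BddBelow (Set.range fun l : {c : 𝕜 // ‖c‖ = 1} =>
      ‖J.toLinearMap a - (l : 𝕜) • J.toLinearMap b‖) := by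
    refine ⟨0, ?_⟩
    rintro r ⟨l, rfl⟩
    exact norm_nonneg _
  refine le_trans (ciInf_le hbdd ⟨lam, hlam⟩) ?_
  have hmap : J.toLinearMap (a - lam • b) = J.toLinearMap a - lam • J.toLinearMap b := by
    rw [map_sub, map_smul]
  rw [← hmap, show J.toLinearMap (a - lam • b) = J (a - lam • b) from rfl, J.norm_map]
  refine c0_norm_le _ (by linarith) fun n => ?_
  rw [show (a - lam • b) n = a n - lam * b n from rfl]
  exact hb25 n


end main
end Aux

/-- If `K` is a compact Hausdorff space whose derived set (the set of
non-isolated points) is infinite, with scalars `𝕜 ∈ {ℝ, ℂ}`, then there is a linear isometric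
embedding of `c₀` into `C(K)` whose range does SPR. -/
theorem c0_SPR_embedding_of_infinite_derived_set {𝕜 : Type*} [RCLike 𝕜]
    {K : Type*} [TopologicalSpace K] [CompactSpace K] [T2Space K]
    (hinf : (derivedSet (Set.univ : Set K)).Infinite) :
    ∃ J : C₀(ℕ, 𝕜) →ₗᵢ[𝕜] C(K, 𝕜), DoesSPR (LinearMap.range J.toLinearMap) := by
  obtain ⟨ψ, p, q, H1, H2a, H2b, H3a, H3b, H3c⟩ := exists_psi 𝕜 hinf
  exact main_of_psi ψ p q H1 H2a H2b H3a H3b H3c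

end
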